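/- Let (X_n) be a sequence of Banach spaces containing isomorphs of an infinite-dimensional Banach space X uniformly. Then (Σ_n X_n)₀ \ ⋃_{p>0}(Σ_n X_n)_p together with 0 contains a closed subspace of (Σ_n X_n)₀ of dimension dim X. -/

import Mathlib

open Filter Topology

private lemma log_aux (p : ℝ) (hp : 0 < p) :
    ¬ Summable (fun n : ℕ => ((Real.log ((n : ℝ) + 2))⁻¹) ^ p) := by
  intro hs
  have h2p : (0:ℝ) < 2 * p := by linarith
  have key : ∀ n : ℕ, ((2*p) ^ p)⁻¹ * ((n:ℝ)+2) ^ (-(2:ℝ)⁻¹) ≤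
      ((Real.log ((n : ℝ) + 2))⁻¹) ^ p := by
    intro n
    set x : ℝ := (n:ℝ) + 2 with hxdef
    have hn0 : (0:ℝ) ≤ (n:ℝ) := Nat.cast_nonneg n
    have hx2 : (2:ℝ) ≤ x := by rw [hxdef]; linarith
    have hx1 : (1:ℝ) < x := by linarith
    have hx0 : (0:ℝ) ≤ x := by linarith
    have hlog : 0 < Real.log x := Real.log_pos hx1
    have h1 : Real.log x ≤ x ^ ((2*p)⁻¹) / (2*p)⁻¹ :=
      Real.log_le_rpow_div hx0 (by positivity)
    have h1' : Real.log x ≤ (2*p) * x ^ ((2*p)⁻¹) := by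
      rwa [div_eq_mul_inv, inv_inv, mul_comm] at h1
    have h2 : (Real.log x) ^ p ≤ ((2*p) * x ^ ((2*p)⁻¹)) ^ p :=
      Real.rpow_le_rpow hlog.le h1' hp.le
    have h3 : ((2*p) * x ^ ((2*p)⁻¹)) ^ p = (2*p) ^ p * x ^ ((2:ℝ)⁻¹) := by
      have hpne : p ≠ 0 := hp.ne'
      rw [Real.mul_rpow h2p.le (Real.rpow_nonneg hx0 _), ← Real.rpow_mul hx0,
        show (2*p)⁻¹ * p = (2:ℝ)⁻¹ by field_simp]
    rw [h3] at h2
    have h4 : ((2*p) ^ p * x ^ ((2:ℝ)⁻¹))⁻¹ ≤ ((Real.log x) ^ p)⁻¹ := by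
      gcongr
    calc ((2*p) ^ p)⁻¹ * x ^ (-(2:ℝ)⁻¹)
        = ((2*p) ^ p * x ^ ((2:ℝ)⁻¹))⁻¹ := by
          rw [Real.rpow_neg hx0, mul_inv]
      _ ≤ ((Real.log x) ^ p)⁻¹ := h4
      _ = ((Real.log x)⁻¹) ^ p := by rw [← Real.inv_rpow hlog.le]
  have hs2 : Summable (fun n : ℕ => ((2*p) ^ p)⁻¹ * ((n:ℝ)+2) ^ (-(2:ℝ)⁻¹)) :=
    Summable.of_nonneg_of_le (fun n => by positivity) key hs
  have hs3 : Summable (fun n : ℕ => ((n:ℝ)+2) ^ (-(2:ℝ)⁻¹)) := by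
    have := hs2.mul_left ((2*p) ^ p)
    have hne : ((2*p) ^ p) ≠ 0 := by positivity
    simpa [← mul_assoc, mul_inv_cancel₀ hne] using this
  have hs4 : Summable (fun n : ℕ => (n:ℝ) ^ (-(2:ℝ)⁻¹)) := by
    rw [← summable_nat_add_iff 2]
    convert hs3 using 2 with n
    · rfl
    push_cast
    ring_nf
  have := Real.summable_nat_rpow.mp hs4
  norm_num at this

theorem stmt15.{u, v} (X : Type u) [NormedAddCommGroup X] [NormedSpace ℝ X]
    [CompleteSpace X] (hX : ¬ FiniteDimensional ℝ X)
    (Y : ℕ → Type v) [∀ n, NormedAddCommGroup (Y n)] [∀ n, NormedSpace ℝ (Y n)]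
    [∀ n, CompleteSpace (Y n)]
    (δ : ℝ) (hδ : 0 < δ) (R : ∀ n, X →L[ℝ] Y n)
    (hR : ∀ n, ‖R n‖ ≤ δ) (hRinv : ∀ n x, ‖x‖ ≤ δ * ‖R n x‖) :
    ∃ S : Submodule ℝ (∀ n, Y n),
      (∀ f ∈ S, Tendsto (fun n => ‖f n‖) atTop (𝓝 0)) ∧
      Cardinal.lift.{u} (Module.rank ℝ S) = Cardinal.lift.{v} (Module.rank ℝ X) ∧
      (∀ f ∈ S, f ≠ 0 → ∀ p : ℝ, 0 < p → ¬ Summable fun n => ‖f n‖ ^ p) ∧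
      (∀ z : ∀ n, Y n, Tendsto (fun n => ‖z n‖) atTop (𝓝 0) →
        (∃ F : ℕ → ∀ n, Y n, (∀ j, F j ∈ S) ∧
          Tendsto (fun j => ⨆ n, ‖F j n - z n‖) atTop (𝓝 0)) → z ∈ S) := by
  classical
  set c : ℕ → ℝ := fun n => (Real.log ((n:ℝ)+2))⁻¹ with hc
  have hcpos : ∀ n, 0 < c n := fun n => by
    have hn0 : (0:ℝ) ≤ (n:ℝ) := Nat.cast_nonneg n
    have : (1:ℝ) < (n:ℝ) + 2 := by linarith
    exact inv_pos.mpr (Real.log_pos this)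
  have hczero : Tendsto c atTop (𝓝 0) := by
    apply Tendsto.inv_tendsto_atTop
    exact Real.tendsto_log_atTop.comp
      (tendsto_atTop_add_const_right _ 2 tendsto_natCast_atTop_atTop)
  set T : X →ₗ[ℝ] ∀ n, Y n :=
    { toFun := fun x n => c n • R n x
      map_add' := by intro a b; funext n; simp [smul_add]
      map_smul' := by
        intro r a; funext n
        simp only [map_smul, RingHom.id_apply, Pi.smul_apply]
        rw [smul_comm] } with hT
  have hTapp : ∀ x n, T x n = c n • R n x := fun _ _ => rfl
  -- norm bounds
  have hub : ∀ (x : X) (n : ℕ), ‖T x n‖ ≤ (δ * ‖x‖) * c n := by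
    intro x n
    rw [hTapp, norm_smul, Real.norm_eq_abs, abs_of_pos (hcpos n),
      mul_comm (δ * ‖x‖) (c n)]
    have h1 : ‖(R n) x‖ ≤ δ * ‖x‖ :=
      le_trans ((R n).le_opNorm x) (by gcongr; exact hR n)
    exact mul_le_mul_of_nonneg_left h1 (hcpos n).le
  have hlb : ∀ (x : X) (n : ℕ), (‖x‖ / δ) * c n ≤ ‖T x n‖ := by
    intro x n
    rw [hTapp, norm_smul, Real.norm_eq_abs, abs_of_pos (hcpos n),
      mul_comm (‖x‖ / δ) (c n)]
    have h1 : ‖x‖ / δ ≤ ‖(R n) x‖ := (div_le_iff₀' hδ).mpr (hRinv n x)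
    exact mul_le_mul_of_nonneg_left h1 (hcpos n).le
  have hTinj : Function.Injective T := by
    rw [← LinearMap.ker_eq_bot, LinearMap.ker_eq_bot']
    intro x hx
    have h0 : ‖x‖ ≤ δ * ‖R 0 x‖ := hRinv 0 x
    have hx0 : T x 0 = 0 := by rw [hx]; rfl
    have : (R 0) x = 0 := by
      have := hx0
      rw [hTapp] at this
      rcases smul_eq_zero.mp this with h | h
      · exact absurd h (hcpos 0).ne'
      · exact h
    rw [this, norm_zero, mul_zero] at h0
    exact norm_le_zero_iff.mp h0
  refine ⟨LinearMap.range T, ?_, ?_, ?_, ?_⟩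
  · -- tendsto 0
    rintro f ⟨x, rfl⟩
    refine squeeze_zero (fun n => norm_nonneg _) (hub x) ?_
    simpa using hczero.const_mul (δ * ‖x‖)
  · -- rank
    have e : X ≃ₗ[ℝ] LinearMap.range T := LinearEquiv.ofInjective T hTinj
    exact e.lift_rank_eq.symm
  · -- not summable
    rintro f ⟨x, rfl⟩ hf p hp hsum
    have hx : x ≠ 0 := fun h => hf (by rw [h, map_zero])
    have hK : 0 < ‖x‖ / δ := div_pos (norm_pos_iff.mpr hx) hδ
    set K := ‖x‖ / δ
    have hb : ∀ n, K ^ p * (c n) ^ p ≤ ‖T x n‖ ^ p := by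
      intro n
      rw [← Real.mul_rpow hK.le (hcpos n).le]
      exact Real.rpow_le_rpow (mul_nonneg hK.le (hcpos n).le) (hlb x n) hp.le
    have hs2 : Summable (fun n => K ^ p * (c n) ^ p) :=
      Summable.of_nonneg_of_le
        (fun n => mul_nonneg (Real.rpow_nonneg hK.le _)
          (Real.rpow_nonneg (hcpos n).le _)) hb hsum
    have hs3 : Summable (fun n => (c n) ^ p) := by
      have := hs2.mul_left (K ^ p)⁻¹
      have hne : K ^ p ≠ 0 := (Real.rpow_pos_of_pos hK _).ne'
      simpa [← mul_assoc, inv_mul_cancel₀ hne] using this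
    exact log_aux p hp hs3
  · -- closedness
    rintro z hz ⟨F, hFmem, hFz⟩
    have hF0 : ∀ j, Tendsto (fun n => ‖F j n‖) atTop (𝓝 0) := by
      intro j
      obtain ⟨x, hx⟩ := hFmem j
      rw [← hx]
      refine squeeze_zero (fun n => norm_nonneg _) (hub x) ?_
      simpa using hczero.const_mul (δ * ‖x‖)
    set s : ℕ → ℝ := fun j => ⨆ n, ‖F j n - z n‖ with hs
    have hdiff : ∀ j, Tendsto (fun n => ‖F j n - z n‖) atTop (𝓝 0) := by
      intro j
      refine squeeze_zero (fun n => norm_nonneg _)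
        (fun n => norm_sub_le _ _) ?_
      simpa using (hF0 j).add hz
    have hbdd : ∀ j, BddAbove (Set.range fun n => ‖F j n - z n‖) :=
      fun j => (hdiff j).bddAbove_range
    have hle : ∀ j n, ‖F j n - z n‖ ≤ s j := fun j n => le_ciSup (hbdd j) n
    have hs0 : ∀ j, 0 ≤ s j := fun j => le_trans (norm_nonneg _) (hle j 0)
    choose w hw using fun j => hFmem j
    set C : ℝ := δ * (c 0)⁻¹ with hC
    have hCpos : 0 < C := by positivity
    have hkey : ∀ j k, ‖w j - w k‖ ≤ C * (s j + s k) := by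
      intro j k
      have h1 : ‖w j - w k‖ ≤ δ * ‖R 0 (w j - w k)‖ := hRinv 0 _
      have h2 : (c 0) • (R 0 (w j - w k)) = F j 0 - F k 0 := by
        rw [map_sub, smul_sub, ← hTapp, ← hTapp, hw, hw]
      have h3 : c 0 * ‖R 0 (w j - w k)‖ = ‖F j 0 - F k 0‖ := by
        rw [← h2, norm_smul, Real.norm_eq_abs, abs_of_pos (hcpos 0)]
      have h4 : ‖F j 0 - F k 0‖ ≤ s j + s k := by
        calc ‖F j 0 - F k 0‖ ≤ ‖F j 0 - z 0‖ + ‖F k 0 - z 0‖ := by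
              simpa using norm_sub_le (F j 0 - z 0) (F k 0 - z 0)
          _ ≤ s j + s k := add_le_add (hle j 0) (hle k 0)
      have h5 : ‖R 0 (w j - w k)‖ = (c 0)⁻¹ * ‖F j 0 - F k 0‖ := by
        field_simp [← h3, (hcpos 0).ne']
        linarith [h3]
      calc ‖w j - w k‖ ≤ δ * ((c 0)⁻¹ * ‖F j 0 - F k 0‖) := by rw [← h5]; exact h1
        _ = C * ‖F j 0 - F k 0‖ := by ring
        _ ≤ C * (s j + s k) := by gcongr
    have hcauchy : CauchySeq w := by
      rw [Metric.cauchySeq_iff]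
      intro ε hε
      have : ∀ᶠ j in atTop, s j < ε / (2 * C + 1) := by
        refine (hFz.eventually (gt_mem_nhds ?_))
        positivity
      obtain ⟨N, hN⟩ := this.exists_forall_of_atTop
      refine ⟨N, fun m hm n hn => ?_⟩
      rw [dist_eq_norm]
      calc ‖w m - w n‖ ≤ C * (s m + s n) := hkey m n
        _ < C * (ε / (2 * C + 1) + ε / (2 * C + 1)) :=
            mul_lt_mul_of_pos_left (add_lt_add (hN m hm) (hN n hn)) hCpos
        _ ≤ ε := by
            rw [← add_div, ← mul_div_assoc,
              div_le_iff₀ (by positivity : (0:ℝ) < 2 * C + 1)]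
            nlinarith [hCpos.le, hε.le]
    obtain ⟨x, hx⟩ := cauchySeq_tendsto_of_complete hcauchy
    refine ⟨x, ?_⟩
    funext n
    have l1 : Tendsto (fun j => F j n) atTop (𝓝 (z n)) := by
      rw [tendsto_iff_norm_sub_tendsto_zero]
      refine squeeze_zero (fun j => norm_nonneg _) (fun j => hle j n) hFz
    have l2 : Tendsto (fun j => F j n) atTop (𝓝 (T x n)) := by
      have : Tendsto (fun j => T (w j) n) atTop (𝓝 (T x n)) := by
        simp only [hTapp]
        exact (((R n).continuous.tendsto x).comp hx).const_smul (c n)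
      simpa only [hw] using this
    exact tendsto_nhds_unique l2 l1
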